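/- Let I be a Functional Stable Marriage instance, m a man and w a woman with f_m(μ_M(m)) > 1 and f_w(μ_W(w)) > 1. Let J be the instance obtained by decreasing all preference values of m and of w by 1 and decreasing k by 1. Then the set of stable matchings of I and J coincide, and for every stable matching μ (all perfect), balance_I(μ) = balance_J(μ) + 1; consequently Bal(I) ≤ k iff Bal(J) ≤ k−1. -/
import Mathlib


open scoped Classical

/-- A Stable Marriage instance: `acc` is the mutual acceptability relation,
`pm m w` is man `m`'s preference value for woman `w` (lower = better),
`pw w m` is woman `w`'s preference value for man `m`. -/
structure SMInst (M W : Type*) where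
  acc : M → W → Prop
  pm : M → W → ℕ
  pw : W → M → ℕ

namespace SMInst

variable {M W : Type*} (I : SMInst M W)

/-- A matching, encoded as a relation: matched pairs are acceptable and
each person appears in at most one pair. -/
def IsMatching (r : M → W → Prop) : Prop :=
  (∀ m w, r m w → I.acc m w) ∧
  (∀ m w w', r m w → r m w' → w = w') ∧
  (∀ m m' w, r m w → r m' w → m = m')

/-- `m` is matched by `r`. -/
def MMatched (r : M → W → Prop) (m : M) : Prop := ∃ w, r m w

/-- `w` is matched by `r`. -/
def WMatched (r : M → W → Prop) (w : W) : Prop := ∃ m, r m w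

/-- `(m, w)` blocks `r`: the pair is acceptable, `m` is unmatched or prefers `w`
to his partner, and `w` is unmatched or prefers `m` to her partner. -/
def Blocks (r : M → W → Prop) (m : M) (w : W) : Prop :=
  I.acc m w ∧
  (∀ w', r m w' → I.pm m w < I.pm m w') ∧
  (∀ m', r m' w → I.pw w m < I.pw w m')

/-- A stable matching: a matching with no blocking pair. -/
def IsStable (r : M → W → Prop) : Prop :=
  I.IsMatching r ∧ ∀ m w, ¬ I.Blocks r m w

/-- Sum of the men's preference values over the pairs of a matching. -/
noncomputable def sumM [Fintype M] [Fintype W] (r : M → W → Prop) : ℕ :=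
  ∑ p ∈ Finset.univ.filter (fun p : M × W => r p.1 p.2), I.pm p.1 p.2

/-- Sum of the women's preference values over the pairs of a matching. -/
noncomputable def sumW [Fintype M] [Fintype W] (r : M → W → Prop) : ℕ :=
  ∑ p ∈ Finset.univ.filter (fun p : M × W => r p.1 p.2), I.pw p.2 p.1

/-- Balance of a matching. -/
noncomputable def bal [Fintype M] [Fintype W] (r : M → W → Prop) : ℕ :=
  max (I.sumM r) (I.sumW r)

/-- Blocking pair for a perfect matching given as an equivalence `M ≃ W`. -/
def BlocksE (e : M ≃ W) (m : M) (w : W) : Prop :=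
  I.acc m w ∧ I.pm m w < I.pm m (e m) ∧ I.pw w m < I.pw w (e.symm w)

/-- A stable perfect matching: all matched pairs acceptable, no blocking pair. -/
def IsStableE (e : M ≃ W) : Prop :=
  (∀ m, I.acc m (e m)) ∧ ∀ m w, ¬ I.BlocksE e m w

/-- Sum of the men's preference values in a perfect matching. -/
def sumME [Fintype M] (e : M ≃ W) : ℕ := ∑ m, I.pm m (e m)

/-- Sum of the women's preference values in a perfect matching. -/
def sumWE [Fintype W] (e : M ≃ W) : ℕ := ∑ w, I.pw w (e.symm w)

/-- Balance of a perfect matching. -/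
def balE [Fintype M] [Fintype W] (e : M ≃ W) : ℕ := max (I.sumME e) (I.sumWE e)

end SMInst

/-- Shrinking gaps. Decreasing all of m₀'s and w₀'s preference
values by 1 (and k by 1) preserves the set of (perfect) stable matchings,
decreases every balance by exactly 1, and hence Bal(I) ≤ k iff Bal(J) ≤ k − 1. -/
theorem shrink_gap_rule {M W : Type*} [Fintype M] [Fintype W]
    (I J : SMInst M W) (m0 : M) (w0 : W) (k : ℕ) (hk : 1 ≤ k)
    (μM μW : M ≃ W) (hμM : I.IsStableE μM) (hμW : I.IsStableE μW)
    (hvalm : ∀ m w, I.acc m w → 1 ≤ I.pm m w)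
    (hvalw : ∀ m w, I.acc m w → 1 ≤ I.pw w m)
    (hinjm : ∀ m w w', I.acc m w → I.acc m w' → I.pm m w = I.pm m w' → w = w')
    (hinjw : ∀ w m m', I.acc m w → I.acc m' w → I.pw w m = I.pw w m' → m = m')
    (hm0 : 1 < I.pm m0 (μM m0)) (hw0 : 1 < I.pw w0 (μW.symm w0))
    (hacc : J.acc = I.acc)
    (hJpm : ∀ m w, J.pm m w = if m = m0 then I.pm m w - 1 else I.pm m w)
    (hJpw : ∀ w m, J.pw w m = if w = w0 then I.pw w m - 1 else I.pw w m) :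
    (∀ e : M ≃ W, I.IsStableE e ↔ J.IsStableE e) ∧
    (∀ e : M ≃ W, I.IsStableE e → I.balE e = J.balE e + 1) ∧
    ((∃ e : M ≃ W, I.IsStableE e ∧ I.balE e ≤ k) ↔
      (∃ e : M ≃ W, J.IsStableE e ∧ J.balE e ≤ k - 1)) := by
  -- blocking-pair equivalence
  have hblock : ∀ e : M ≃ W, (∀ m, I.acc m (e m)) →
      ∀ m w, (I.BlocksE e m w ↔ J.BlocksE e m w) := by
    intro e hacc' m w
    unfold SMInst.BlocksE
    rw [hacc, hJpm, hJpm, hJpw, hJpw]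
    have h1 : I.acc m w → 1 ≤ I.pm m w := hvalm m w
    have h2 : I.acc m w → 1 ≤ I.pw w m := hvalw m w
    constructor
    · rintro ⟨ha, hb, hc⟩
      refine ⟨ha, ?_, ?_⟩
      · split_ifs with h
        · have := h1 ha; omega
        · exact hb
      · split_ifs with h
        · have := h2 ha; omega
        · exact hc
    · rintro ⟨ha, hb, hc⟩
      refine ⟨ha, ?_, ?_⟩
      · by_cases h : m = m0
        · rw [if_pos h, if_pos h] at hb; omega
        · rw [if_neg h, if_neg h] at hb; exact hb
      · by_cases h : w = w0
        · rw [if_pos h, if_pos h] at hc; omega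
        · rw [if_neg h, if_neg h] at hc; exact hc
  have hstable : ∀ e : M ≃ W, I.IsStableE e ↔ J.IsStableE e := by
    intro e
    constructor
    · rintro ⟨h1, h2⟩
      refine ⟨fun m => by rw [hacc]; exact h1 m, fun m w hb => h2 m w ?_⟩
      exact (hblock e h1 m w).mpr hb
    · rintro ⟨h1, h2⟩
      have h1' : ∀ m, I.acc m (e m) := fun m => by rw [← hacc]; exact h1 m
      exact ⟨h1', fun m w hb => h2 m w ((hblock e h1' m w).mp hb)⟩
  have hbal : ∀ e : M ≃ W, I.IsStableE e → I.balE e = J.balE e + 1 := by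
    intro e he
    have hsm : I.sumME e = J.sumME e + 1 := by
      unfold SMInst.sumME
      have : ∀ m, I.pm m (e m) = J.pm m (e m) + (if m = m0 then 1 else 0) := by
        intro m
        rw [hJpm]
        split_ifs with h
        · have := hvalm m (e m) (he.1 m); omega
        · omega
      rw [Finset.sum_congr rfl (fun m _ => this m), Finset.sum_add_distrib,
        Finset.sum_ite_eq' Finset.univ m0 (fun _ => 1)]
      simp
    have hsw : I.sumWE e = J.sumWE e + 1 := by
      unfold SMInst.sumWE
      have : ∀ w, I.pw w (e.symm w) = J.pw w (e.symm w) + (if w = w0 then 1 else 0) := by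
        intro w
        rw [hJpw]
        split_ifs with h
        · have hac : I.acc (e.symm w) w := by
            have := he.1 (e.symm w); simpa using this
          have := hvalw (e.symm w) w hac; omega
        · omega
      rw [Finset.sum_congr rfl (fun w _ => this w), Finset.sum_add_distrib,
        Finset.sum_ite_eq' Finset.univ w0 (fun _ => 1)]
      simp
    unfold SMInst.balE
    rw [hsm, hsw, max_add_add_right]
  refine ⟨hstable, hbal, ?_⟩
  constructor
  · rintro ⟨e, he, hle⟩
    refine ⟨e, (hstable e).mp he, ?_⟩
    have := hbal e he; omega
  · rintro ⟨e, he, hle⟩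
    have he' : I.IsStableE e := (hstable e).mpr he
    refine ⟨e, he', ?_⟩
    have := hbal e he'; omega
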